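/- If L₁ and L₂ are selfdual Lagrangians on X × X* and Y × Y* respectively, and A : X → Y* is a bounded linear operator, then the Lagrangian on (X × Y) × (X* × Y*) given by L((x,y),(p,q)) = L₁(x, A*y + p) + L₂(y, −Ax + q) is selfdual. -/

import Mathlib

open NormedSpace

/-- Legendre transform in both variables of a Lagrangian on `X × X*`. -/
noncomputable def LagConj {X : Type*} [NormedAddCommGroup X] [NormedSpace ℝ X]
    (L : X × StrongDual ℝ X → EReal) (p : StrongDual ℝ X) (u : X) : EReal :=
  ⨆ yq : X × StrongDual ℝ X, (((p yq.1) + (yq.2 u) : ℝ) : EReal) - L yq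

/-- Legendre transform in both variables of a Lagrangian on
`(X × Y) × (X* × Y*)`, with the product duality pairing. -/
noncomputable def LagConj2 {X Y : Type*} [NormedAddCommGroup X] [NormedSpace ℝ X]
    [NormedAddCommGroup Y] [NormedSpace ℝ Y]
    (L : (X × Y) × (StrongDual ℝ X × StrongDual ℝ Y) → EReal)
    (P : StrongDual ℝ X × StrongDual ℝ Y) (U : X × Y) : EReal :=
  ⨆ z : (X × Y) × (StrongDual ℝ X × StrongDual ℝ Y),
    ((P.1 z.1.1 + P.2 z.1.2 + z.2.1 U.1 + z.2.2 U.2 : ℝ) : EReal) - L z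

/-- A selfdual Lagrangian never takes the value `⊥`. -/
lemma selfdual_ne_bot {X : Type*} [NormedAddCommGroup X] [NormedSpace ℝ X]
    (L : X × StrongDual ℝ X → EReal) (hself : ∀ x p, LagConj L p x = L (x, p)) :
    ∀ z, L z ≠ ⊥ := by
  rintro ⟨x, p⟩ hb
  have h1 : (((p x + p x : ℝ) : EReal) - L (x, p)) ≤ LagConj L p x :=
    le_iSup (fun yq : X × StrongDual ℝ X => (((p yq.1) + (yq.2 x) : ℝ) : EReal) - L yq) (x, p)
  rw [hself x p, hb, EReal.coe_sub_bot] at h1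
  simp at h1

/-- Splitting a difference with a sum, when neither summand is `⊥`. -/
lemma ereal_term_split (c d : ℝ) {α β : EReal} (hα : α ≠ ⊥) (hβ : β ≠ ⊥) :
    ((c + d : ℝ) : EReal) - (α + β) = ((c : EReal) - α) + ((d : EReal) - β) := by
  induction α using EReal.rec with
  | bot => exact absurd rfl hα
  | top =>
    rw [EReal.top_add_of_ne_bot hβ, EReal.sub_top, EReal.sub_top, EReal.bot_add]
  | coe x =>
    induction β using EReal.rec with
    | bot => exact absurd rfl hβ
    | top =>
      rw [EReal.add_top_of_ne_bot hα, EReal.sub_top, EReal.sub_top, EReal.add_bot]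
    | coe y =>
      norm_cast
      ring

/-- Supremum of a sum over a product index splits into a sum of suprema (over `EReal`). -/
lemma ereal_iSup_prod_add {ι κ : Type*} (f : ι → EReal) (g : κ → EReal) :
    (⨆ p : ι × κ, f p.1 + g p.2) = (⨆ i, f i) + ⨆ j, g j := by
  apply le_antisymm
  · exact iSup_le fun p => add_le_add (le_iSup f p.1) (le_iSup g p.2)
  · apply EReal.add_le_of_forall_lt
    intro a ha b hb
    rw [lt_iSup_iff] at ha hb
    obtain ⟨i, hi⟩ := ha
    obtain ⟨j, hj⟩ := hb
    exact le_trans (add_le_add hi.le hj.le)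
      (le_iSup (fun p : ι × κ => f p.1 + g p.2) (i, j))

/-- If `L₁, L₂` are selfdual on `X × X*` and `Y × Y*` and
`A : X → Y*` is bounded linear, then
`L((x,y),(p,q)) = L₁(x, A*y + p) + L₂(y, −Ax + q)` is selfdual. -/
theorem stmt16 {X Y : Type*} [NormedAddCommGroup X] [NormedSpace ℝ X] [CompleteSpace X]
    [NormedAddCommGroup Y] [NormedSpace ℝ Y] [CompleteSpace Y]
    (hreflX : Function.Surjective (NormedSpace.inclusionInDoubleDual ℝ X))
    (hreflY : Function.Surjective (NormedSpace.inclusionInDoubleDual ℝ Y))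
    (L₁ : X × StrongDual ℝ X → EReal) (L₂ : Y × StrongDual ℝ Y → EReal)
    (hself₁ : ∀ x p, LagConj L₁ p x = L₁ (x, p))
    (hself₂ : ∀ y q, LagConj L₂ q y = L₂ (y, q))
    (A : X →L[ℝ] StrongDual ℝ Y) (Astar : Y →L[ℝ] StrongDual ℝ X)
    (hAstar : ∀ (x : X) (y : Y), Astar y x = A x y)
    (L : (X × Y) × (StrongDual ℝ X × StrongDual ℝ Y) → EReal)
    (hL : ∀ (x : X) (y : Y) (p : StrongDual ℝ X) (q : StrongDual ℝ Y),
      L ((x, y), (p, q)) = L₁ (x, Astar y + p) + L₂ (y, -A x + q)) :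
    ∀ (U : X × Y) (P : StrongDual ℝ X × StrongDual ℝ Y), LagConj2 L P U = L (U, P) := by
  have hbot₁ := selfdual_ne_bot L₁ hself₁
  have hbot₂ := selfdual_ne_bot L₂ hself₂
  rintro ⟨u, v⟩ ⟨P1, P2⟩
  -- the reindexing equivalence
  let e : ((X × StrongDual ℝ X) × (Y × StrongDual ℝ Y)) ≃ ((X × Y) × (StrongDual ℝ X × StrongDual ℝ Y)) :=
    { toFun := fun w => ((w.1.1, w.2.1), (w.1.2 - Astar w.2.1, w.2.2 + A w.1.1))
      invFun := fun z => ((z.1.1, Astar z.1.2 + z.2.1), (z.1.2, -A z.1.1 + z.2.2))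
      left_inv := by
        rintro ⟨⟨x, r⟩, ⟨y, s⟩⟩
        have h1 : Astar y + (r - Astar y) = r := by abel
        have h2 : -A x + (s + A x) = s := by abel
        simp [h1, h2]
      right_inv := by
        rintro ⟨⟨x, y⟩, ⟨p, q⟩⟩
        have h1 : Astar y + (p - Astar y) = p := by abel
        have h2 : -A x + (q + A x) = q := by abel
        simp [h1, h2] }
  have key : ∀ w : (X × StrongDual ℝ X) × (Y × StrongDual ℝ Y),
      ((P1 (e w).1.1 + P2 (e w).1.2 + (e w).2.1 u + (e w).2.2 v : ℝ) : EReal) - L (e w)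
      = ((((Astar v + P1) w.1.1 + w.1.2 u : ℝ) : EReal) - L₁ w.1)
        + ((((-A u + P2) w.2.1 + w.2.2 v : ℝ) : EReal) - L₂ w.2) := by
    rintro ⟨⟨x, r⟩, ⟨y, s⟩⟩
    have hLval : L (e ((x, r), (y, s))) = L₁ (x, r) + L₂ (y, s) := by
      show L ((x, y), (r - Astar y, s + A x)) = _
      have h1 : Astar y + (r - Astar y) = r := by abel
      have h2 : -A x + (s + A x) = s := by abel
      rw [hL, h1, h2]
    rw [hLval]
    have hre : (P1 (e ((x, r), (y, s))).1.1 + P2 (e ((x, r), (y, s))).1.2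
        + (e ((x, r), (y, s))).2.1 u + (e ((x, r), (y, s))).2.2 v : ℝ)
        = ((Astar v + P1) x + r u) + ((-A u + P2) y + s v) := by
      show (P1 x + P2 y + (r - Astar y) u + (s + A x) v : ℝ) = _
      simp only [ContinuousLinearMap.add_apply, ContinuousLinearMap.sub_apply,
        ContinuousLinearMap.neg_apply, hAstar]
      ring
    rw [hre]
    exact ereal_term_split _ _ (hbot₁ (x, r)) (hbot₂ (y, s))
  calc LagConj2 L (P1, P2) (u, v)
      = ⨆ z : (X × Y) × (StrongDual ℝ X × StrongDual ℝ Y),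
          ((P1 z.1.1 + P2 z.1.2 + z.2.1 u + z.2.2 v : ℝ) : EReal) - L z := rfl
    _ = ⨆ w : (X × StrongDual ℝ X) × (Y × StrongDual ℝ Y),
          ((P1 (e w).1.1 + P2 (e w).1.2 + (e w).2.1 u + (e w).2.2 v : ℝ) : EReal) - L (e w) :=
        (Equiv.iSup_comp (g := fun z : (X × Y) × (StrongDual ℝ X × StrongDual ℝ Y) =>
          ((P1 z.1.1 + P2 z.1.2 + z.2.1 u + z.2.2 v : ℝ) : EReal) - L z) e).symm
    _ = ⨆ w : (X × StrongDual ℝ X) × (Y × StrongDual ℝ Y),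
          (((((Astar v + P1) w.1.1 + w.1.2 u : ℝ) : EReal) - L₁ w.1)
          + ((((-A u + P2) w.2.1 + w.2.2 v : ℝ) : EReal) - L₂ w.2)) := by
        exact iSup_congr key
    _ = LagConj L₁ (Astar v + P1) u + LagConj L₂ (-A u + P2) v :=
        ereal_iSup_prod_add
          (fun z : X × StrongDual ℝ X => (((Astar v + P1) z.1 + z.2 u : ℝ) : EReal) - L₁ z)
          (fun w : Y × StrongDual ℝ Y => (((-A u + P2) w.1 + w.2 v : ℝ) : EReal) - L₂ w)
    _ = L₁ (u, Astar v + P1) + L₂ (v, -A u + P2) := by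
        rw [hself₁, hself₂]
    _ = L ((u, v), (P1, P2)) := (hL u v P1 P2).symm
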